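/- Let n ≥ 1 and let μ_1, …, μ_n satisfy 1 = μ_1 ≤ μ_2 ≤ … ≤ μ_n. Define π_i := (1/μ_i) · ∏_{j=i+1}^{n} (1 − 1/μ_j) for 1 ≤ i ≤ n (the empty product for i = n being 1). Then π is a probability vector and (π, D(μ)) represents the unit exponential distribution, where D(μ) is the first canonical form matrix of μ. -/

import Mathlib

open Matrix
open scoped Nat

/-- The first canonical form matrix of rates `μ`: diagonal `-μ i`, superdiagonal `μ i`. -/
def canonD {n : ℕ} (μ : Fin n → ℝ) : Matrix (Fin n) (Fin n) ℝ :=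
  Matrix.of fun i j => if j = i then -μ i else if (j : ℕ) = (i : ℕ) + 1 then μ i else 0

/-- `(π, D)` represents the unit exponential distribution:
`π · exp(tD) · 𝟙 = e^{-t}` for all `t ≥ 0`. -/
def ReprUnitExp {n : ℕ} (π : Fin n → ℝ) (D : Matrix (Fin n) (Fin n) ℝ) : Prop :=
  ∀ t : ℝ, 0 ≤ t → (π ᵥ* NormedSpace.exp (t • D)) ⬝ᵥ (fun _ => 1) = Real.exp (-t)

/-- If `π` is a left eigenvector of `D` with eigenvalue `-1`, then
`π ᵥ* exp(t • D) = e^{-t} • π`. -/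
theorem vecMul_exp_of_eig {n : ℕ} (π : Fin n → ℝ) (D : Matrix (Fin n) (Fin n) ℝ)
    (heig : π ᵥ* D = -π) (t : ℝ) :
    π ᵥ* NormedSpace.exp (t • D) = Real.exp (-t) • π := by
  letI : NormedRing (Matrix (Fin n) (Fin n) ℝ) := Matrix.linftyOpNormedRing
  letI : NormedAlgebra ℝ (Matrix (Fin n) (Fin n) ℝ) := Matrix.linftyOpNormedAlgebra
  have hpow : ∀ k : ℕ, π ᵥ* D ^ k = ((-1 : ℝ) ^ k) • π := by
    intro k
    induction k with
    | zero => simp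
    | succ k ih =>
      rw [pow_succ, ← Matrix.vecMul_vecMul, ih, Matrix.smul_vecMul, heig, smul_neg,
        pow_succ, mul_smul, neg_one_smul, smul_neg]
  let L : Matrix (Fin n) (Fin n) ℝ →ₗ[ℝ] (Fin n → ℝ) :=
    { toFun := fun M => π ᵥ* M
      map_add' := fun A B => Matrix.vecMul_add A B π
      map_smul' := by
        intro c A
        ext j
        simp [Matrix.vecMul, dotProduct, Finset.mul_sum, mul_left_comm] }
  have hsummable : Summable (fun k : ℕ => (k !⁻¹ : ℝ) • (t • D) ^ k) :=
    NormedSpace.expSeries_summable' (t • D)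
  have hmap : π ᵥ* NormedSpace.exp (t • D)
      = ∑' k : ℕ, π ᵥ* ((k !⁻¹ : ℝ) • (t • D) ^ k) := by
    rw [NormedSpace.exp_eq_tsum ℝ]
    exact (L.toContinuousLinearMap.map_tsum hsummable :)
  rw [hmap]
  have hterm : ∀ k : ℕ, π ᵥ* ((k !⁻¹ : ℝ) • (t • D) ^ k)
      = ((k !⁻¹ : ℝ) * (-t) ^ k) • π := by
    intro k
    have : ((k !⁻¹ : ℝ) • (t • D) ^ k) = ((k !⁻¹ : ℝ) * t ^ k) • D ^ k := by
      rw [smul_pow, smul_smul]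
    rw [this]
    ext j
    have := congrFun (hpow k) j
    simp only [Matrix.vecMul, dotProduct, Matrix.smul_apply, Pi.smul_apply,
      smul_eq_mul] at this ⊢
    calc ∑ i, π i * ((k !⁻¹ : ℝ) * t ^ k * (D ^ k) i j)
        = (k !⁻¹ : ℝ) * t ^ k * ∑ i, π i * (D ^ k) i j := by
          rw [Finset.mul_sum]; exact Finset.sum_congr rfl fun i _ => by ring
      _ = (k !⁻¹ : ℝ) * (-t) ^ k * π j := by rw [this, neg_pow]; ring
  simp only [hterm]
  have hsum2 : Summable (fun k : ℕ => (k !⁻¹ : ℝ) * (-t) ^ k) := by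
    simpa [smul_eq_mul] using NormedSpace.expSeries_summable' (𝕂 := ℝ) (-t)
  rw [hsum2.tsum_smul_const]
  congr 1
  rw [Real.exp_eq_exp_ℝ, NormedSpace.exp_eq_tsum ℝ]
  simp [smul_eq_mul]

theorem stmt3 {n : ℕ} (hn : 0 < n) (μ : Fin n → ℝ) (hμ1 : μ ⟨0, hn⟩ = 1)
    (hmono : Monotone μ) (π : Fin n → ℝ)
    (hπ : ∀ i, π i = (1 / μ i) * ∏ j ∈ Finset.Ioi i, (1 - 1 / μ j)) :
    (∀ i, 0 ≤ π i) ∧ ∑ i, π i = 1 ∧ ReprUnitExp π (canonD μ) := by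
  classical
  have hμ1le : ∀ i, 1 ≤ μ i := by
    intro i
    have : (⟨0, hn⟩ : Fin n) ≤ i := by rw [Fin.le_def]; exact Nat.zero_le _
    simpa [hμ1] using hmono this
  have hμpos : ∀ i, 0 < μ i := fun i => lt_of_lt_of_le one_pos (hμ1le i)
  have hfac : ∀ i, 0 ≤ 1 - 1 / μ i := fun i => by
    have : 1 / μ i ≤ 1 := by
      rw [div_le_one (hμpos i)]; exact hμ1le i
    linarith
  set f : ℕ → ℝ := fun k => ∏ j ∈ Finset.univ.filter (fun j : Fin n => k ≤ (j : ℕ)),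
      (1 - 1 / μ j) with hf
  have hP : ∀ i : Fin n, μ i * π i = f ((i : ℕ) + 1) := by
    intro i
    have hset : Finset.Ioi i = Finset.univ.filter (fun j : Fin n => (i : ℕ) + 1 ≤ (j : ℕ)) := by
      ext j
      simp only [Finset.mem_Ioi, Finset.mem_filter, Finset.mem_univ, true_and, Fin.lt_def]
      omega
    rw [hπ i, hf]
    dsimp only
    rw [← hset]
    field_simp
    exact mul_div_cancel_left₀ _ (ne_of_gt (hμpos i))
  have hQ : ∀ i : Fin n, f (i : ℕ) = μ i * π i - π i := by
    intro i
    have hins : Finset.univ.filter (fun j : Fin n => (i : ℕ) ≤ (j : ℕ)) =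
        insert i (Finset.univ.filter (fun j : Fin n => (i : ℕ) + 1 ≤ (j : ℕ))) := by
      ext j
      simp only [Finset.mem_filter, Finset.mem_univ, true_and, Finset.mem_insert]
      constructor
      · intro h
        rcases Nat.eq_or_lt_of_le h with h' | h'
        · left; exact (Fin.ext h'.symm)
        · right; omega
      · rintro (rfl | h) <;> omega
    have hnotmem : i ∉ Finset.univ.filter (fun j : Fin n => (i : ℕ) + 1 ≤ (j : ℕ)) := by
      simp
    have : f (i : ℕ) = (1 - 1 / μ i) * f ((i : ℕ) + 1) := by
      rw [hf]; dsimp only; rw [hins, Finset.prod_insert hnotmem]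
    rw [this, ← hP i]
    have hμne : μ i ≠ 0 := ne_of_gt (hμpos i)
    field_simp
  have hstep : ∀ i : Fin n, π i = f ((i : ℕ) + 1) - f (i : ℕ) := by
    intro i
    rw [hQ i, ← hP i]
    ring
  have hfn : f n = 1 := by
    rw [hf]
    dsimp only
    apply Finset.prod_eq_one
    intro j hj
    simp only [Finset.mem_filter] at hj
    exact absurd hj.2 (by omega)
  have hf0 : f 0 = 0 := by
    rw [hf]
    dsimp only
    apply Finset.prod_eq_zero (i := (⟨0, hn⟩ : Fin n)) (by simp)
    rw [hμ1]; norm_num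
  have hsum : ∑ i, π i = 1 := by
    calc ∑ i, π i = ∑ i : Fin n, (f ((i : ℕ) + 1) - f (i : ℕ)) :=
          Finset.sum_congr rfl fun i _ => hstep i
      _ = ∑ k ∈ Finset.range n, (f (k + 1) - f k) :=
          Fin.sum_univ_eq_sum_range (fun k => f (k + 1) - f k) n
      _ = f n - f 0 := Finset.sum_range_sub f n
      _ = 1 := by rw [hfn, hf0]; ring
  have hnn : ∀ i, 0 ≤ π i := by
    intro i
    rw [hπ i]
    apply mul_nonneg
    · exact one_div_nonneg.2 (hμpos i).le
    · exact Finset.prod_nonneg fun j _ => hfac j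
  refine ⟨hnn, hsum, ?_⟩
  -- left eigenvector property
  have heig : π ᵥ* canonD μ = -π := by
    funext j
    have hterm : ∀ i : Fin n, π i * canonD μ i j =
        (if i = j then -(μ j * π j) else 0) +
        (if (j : ℕ) = (i : ℕ) + 1 then μ i * π i else 0) := by
      intro i
      by_cases h1 : j = i
      · subst h1
        simp [canonD]
        ring
      · by_cases h2 : (j : ℕ) = (i : ℕ) + 1
        · have : i ≠ j := fun h => h1 (h.symm)
          simp [canonD, h1, h2, this, Ne.symm h1]
          ring
        · simp [canonD, h1, h2, Ne.symm h1]
    have hvm : (π ᵥ* canonD μ) j = ∑ i, π i * canonD μ i j := rfl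
    rw [hvm]
    simp only [hterm, Finset.sum_add_distrib, Finset.sum_ite_eq' Finset.univ j,
      Finset.mem_univ, if_true]
    have hsecond : (∑ i : Fin n, if (j : ℕ) = (i : ℕ) + 1 then μ i * π i else 0)
        = f (j : ℕ) := by
      rcases Nat.eq_zero_or_pos (j : ℕ) with hj0 | hjpos
      · rw [hj0, hf0]
        apply Finset.sum_eq_zero
        intro i _
        rw [if_neg (by omega)]
      · obtain ⟨m, hm⟩ := Nat.exists_eq_succ_of_ne_zero (by omega : (j : ℕ) ≠ 0)
        have hmlt : m < n := by have := j.isLt; omega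
        have := hP ⟨m, hmlt⟩
        rw [Finset.sum_eq_single (⟨m, hmlt⟩ : Fin n)]
        · rw [if_pos (by simp [hm]), this, hm]
        · intro i _ hne
          apply if_neg
          intro hcon
          have hval : (i : ℕ) = m := by omega
          exact hne (Fin.ext (by simp [hval]))
        · intro h
          exact absurd (Finset.mem_univ _) h
    rw [hsecond, hQ j]
    simp
    ring
  intro t _
  rw [vecMul_exp_of_eig π (canonD μ) heig t]
  simp [dotProduct, Finset.mul_sum]
  simpa [Finset.mul_sum] using congrArg (fun x => Real.exp (-t) * x) hsum
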